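/- For a pure rotation twist about an axis through point p: if ξ̄ = (ω̄, p × ω̄) with ‖ω̄‖ = 1, then exp(ξ̂̄ q) = [[e^{ω̂̄ q}, (I − e^{ω̂̄ q})p],[0, 1]], i.e., the exponential fixes the point p. -/

import Mathlib

open Matrix Real

noncomputable section

/-- Skew-symmetric matrix of a 3-vector. -/
def skew (w : Fin 3 → ℝ) : Matrix (Fin 3) (Fin 3) ℝ :=
  !![0, -w 2, w 1; w 2, 0, -w 0; -w 1, w 0, 0]

/-- 4×4 twist matrix of twist coordinates (ω, v). -/
def twistM (w v : Fin 3 → ℝ) : Matrix (Fin 4) (Fin 4) ℝ :=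
  !![0, -w 2, w 1, v 0;
     w 2, 0, -w 0, v 1;
     -w 1, w 0, 0, v 2;
     0, 0, 0, 0]

/-- Homogeneous transformation [[R,t],[0,1]]. -/
def homog (R : Matrix (Fin 3) (Fin 3) ℝ) (t : Fin 3 → ℝ) : Matrix (Fin 4) (Fin 4) ℝ :=
  !![R 0 0, R 0 1, R 0 2, t 0;
     R 1 0, R 1 1, R 1 2, t 1;
     R 2 0, R 2 1, R 2 2, t 2;
     0, 0, 0, 1]

def isSO3 (R : Matrix (Fin 3) (Fin 3) ℝ) : Prop := R * Rᵀ = 1 ∧ R.det = 1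

def isSE3 (H : Matrix (Fin 4) (Fin 4) ℝ) : Prop :=
  ∃ R t, isSO3 R ∧ H = homog R t

def isTwist (X : Matrix (Fin 4) (Fin 4) ℝ) : Prop := ∃ w v, X = twistM w v

def RZ (θ : ℝ) : Matrix (Fin 4) (Fin 4) ℝ :=
  homog !![Real.cos θ, -Real.sin θ, 0; Real.sin θ, Real.cos θ, 0; 0, 0, 1] ![0, 0, 0]

def TZ (d : ℝ) : Matrix (Fin 4) (Fin 4) ℝ := homog 1 ![0, 0, d]

def RX (α : ℝ) : Matrix (Fin 4) (Fin 4) ℝ :=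
  homog !![1, 0, 0; 0, Real.cos α, -Real.sin α; 0, Real.sin α, Real.cos α] ![0, 0, 0]

def TX (a : ℝ) : Matrix (Fin 4) (Fin 4) ℝ := homog 1 ![a, 0, 0]

/-! ### Auxiliary machinery for the exponential of a block matrix -/

def e4 : Fin 4 ≃ Fin 3 ⊕ Fin 1 := (finSumFinEquiv (m := 3) (n := 1)).symm

/-- The ring homomorphism assembling a 3×3 block and a 1×1 block into a 4×4 matrix. -/
def Phi : Matrix (Fin 3) (Fin 3) ℝ × Matrix (Fin 1) (Fin 1) ℝ →+* Matrix (Fin 4) (Fin 4) ℝ where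
  toFun x := (Matrix.fromBlocks x.1 0 0 x.2).submatrix e4 e4
  map_one' := by
    show (Matrix.fromBlocks (1 : Matrix (Fin 3) (Fin 3) ℝ) 0 0
      (1 : Matrix (Fin 1) (Fin 1) ℝ)).submatrix e4 e4 = 1
    rw [Matrix.fromBlocks_one, Matrix.submatrix_one_equiv]
  map_mul' x y := by
    show _ = (Matrix.fromBlocks x.1 0 0 x.2).submatrix e4 e4 *
      (Matrix.fromBlocks y.1 0 0 y.2).submatrix (e4 : Fin 4 → Fin 3 ⊕ Fin 1) e4
    rw [Matrix.submatrix_mul_equiv (Matrix.fromBlocks x.1 0 0 x.2)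
      (Matrix.fromBlocks y.1 0 0 y.2) _ e4 _, Matrix.fromBlocks_multiply]
    simp
  map_zero' := by
    show (Matrix.fromBlocks (0 : Matrix (Fin 3) (Fin 3) ℝ) 0 0
      (0 : Matrix (Fin 1) (Fin 1) ℝ)).submatrix e4 e4 = 0
    simp
  map_add' x y := by
    show (Matrix.fromBlocks (x.1 + y.1) 0 0 (x.2 + y.2)).submatrix e4 e4 =
      (Matrix.fromBlocks x.1 0 0 x.2).submatrix e4 e4 +
      (Matrix.fromBlocks y.1 0 0 y.2).submatrix e4 e4
    rw [show (Matrix.fromBlocks (x.1 + y.1) (0 : Matrix (Fin 3) (Fin 1) ℝ)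
        (0 : Matrix (Fin 1) (Fin 3) ℝ) (x.2 + y.2)) =
        Matrix.fromBlocks x.1 0 0 x.2 + Matrix.fromBlocks y.1 0 0 y.2 by
      rw [Matrix.fromBlocks_add]; norm_num]
    rw [Matrix.submatrix_add]
    rfl

def PhiL : (Matrix (Fin 3) (Fin 3) ℝ × Matrix (Fin 1) (Fin 1) ℝ) →ₗ[ℝ] Matrix (Fin 4) (Fin 4) ℝ :=
  { Phi.toAddMonoidHom with
    map_smul' := fun c x => by
      show (Matrix.fromBlocks (c • x.1) 0 0 (c • x.2)).submatrix e4 e4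
        = c • (Matrix.fromBlocks x.1 0 0 x.2).submatrix e4 e4
      rw [show (Matrix.fromBlocks (c • x.1) (0 : Matrix (Fin 3) (Fin 1) ℝ)
          (0 : Matrix (Fin 1) (Fin 3) ℝ) (c • x.2)) =
          c • Matrix.fromBlocks x.1 0 0 x.2 by rw [Matrix.fromBlocks_smul]; norm_num]
      rw [Matrix.submatrix_smul]
      rfl }

theorem Phi_cont : Continuous Phi := PhiL.continuous_of_finiteDimensional

theorem exp_Phi (A : Matrix (Fin 3) (Fin 3) ℝ) :
    NormedSpace.exp (Phi (A, 0)) = Phi (NormedSpace.exp A, 1) := by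
  letI : SeminormedRing (Matrix (Fin 3) (Fin 3) ℝ) := Matrix.linftyOpSemiNormedRing
  letI : NormedRing (Matrix (Fin 3) (Fin 3) ℝ) := Matrix.linftyOpNormedRing
  letI : NormedAlgebra ℝ (Matrix (Fin 3) (Fin 3) ℝ) := Matrix.linftyOpNormedAlgebra
  letI : NormedAlgebra ℚ (Matrix (Fin 3) (Fin 3) ℝ) :=
    { norm_smul_le := fun r x => by
        rw [← Rat.cast_smul_eq_qsmul ℝ r x]
        exact (norm_smul_le (r : ℝ) x).trans (by simp) }
  letI : SeminormedRing (Matrix (Fin 1) (Fin 1) ℝ) := Matrix.linftyOpSemiNormedRing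
  letI : NormedRing (Matrix (Fin 1) (Fin 1) ℝ) := Matrix.linftyOpNormedRing
  letI : NormedAlgebra ℝ (Matrix (Fin 1) (Fin 1) ℝ) := Matrix.linftyOpNormedAlgebra
  letI : NormedAlgebra ℚ (Matrix (Fin 1) (Fin 1) ℝ) :=
    { norm_smul_le := fun r x => by
        rw [← Rat.cast_smul_eq_qsmul ℝ r x]
        exact (norm_smul_le (r : ℝ) x).trans (by simp) }
  letI : SeminormedRing (Matrix (Fin 4) (Fin 4) ℝ) := Matrix.linftyOpSemiNormedRing
  letI : NormedRing (Matrix (Fin 4) (Fin 4) ℝ) := Matrix.linftyOpNormedRing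
  letI : NormedAlgebra ℝ (Matrix (Fin 4) (Fin 4) ℝ) := Matrix.linftyOpNormedAlgebra
  erw [← NormedSpace.map_exp Phi Phi_cont]
  congr 1
  have : NormedSpace.exp ((A, 0) : Matrix (Fin 3) (Fin 3) ℝ × Matrix (Fin 1) (Fin 1) ℝ) =
      (NormedSpace.exp A, NormedSpace.exp (0 : Matrix (Fin 1) (Fin 1) ℝ)) := by
    ext : 1
    · exact Prod.fst_exp _
    · exact Prod.snd_exp _
  erw [this, NormedSpace.exp_zero]

theorem Phi_eq (M : Matrix (Fin 3) (Fin 3) ℝ) (c : Matrix (Fin 1) (Fin 1) ℝ) :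
    Phi (M, c) = !![M 0 0, M 0 1, M 0 2, 0;
                    M 1 0, M 1 1, M 1 2, 0;
                    M 2 0, M 2 1, M 2 2, 0;
                    0, 0, 0, c 0 0] := by
  show (Matrix.fromBlocks M 0 0 c).submatrix e4 e4 = _
  ext i j
  fin_cases i <;> fin_cases j <;>
    simp [Matrix.submatrix_apply, show e4 0 = Sum.inl 0 from rfl,
      show e4 1 = Sum.inl 1 from rfl, show e4 2 = Sum.inl 2 from rfl,
      show e4 3 = Sum.inr 0 from rfl, Matrix.fromBlocks]

theorem homog_one (p : Fin 3 → ℝ) :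
    homog 1 p = !![1,0,0,p 0; 0,1,0,p 1; 0,0,1,p 2; 0,0,0,1] := by
  norm_num [homog, Matrix.one_fin_three, Matrix.vecHead, Matrix.vecTail, Matrix.cons_val_two]

set_option maxHeartbeats 1000000 in
theorem homog_conj (R : Matrix (Fin 3) (Fin 3) ℝ) (p : Fin 3 → ℝ) :
    homog 1 p * !![R 0 0, R 0 1, R 0 2, 0;
                   R 1 0, R 1 1, R 1 2, 0;
                   R 2 0, R 2 1, R 2 2, 0;
                   0, 0, 0, 1] * homog 1 (-p) = homog R ((1 - R) *ᵥ p) := by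
  rw [homog_one, homog_one]
  ext i j
  fin_cases i <;> fin_cases j <;>
    simp [homog, Matrix.mul_apply, Fin.sum_univ_four, Matrix.mulVec,
      dotProduct, Fin.sum_univ_three, Matrix.sub_apply, Matrix.one_apply,
      Matrix.vecHead, Matrix.vecTail] <;> ring

set_option maxHeartbeats 1000000 in
theorem homog_mul_inv (p : Fin 3 → ℝ) : homog 1 p * homog 1 (-p) = 1 := by
  rw [homog_one, homog_one]
  ext i j
  fin_cases i <;> fin_cases j <;>
    simp [Matrix.mul_apply, Fin.sum_univ_four, Matrix.one_apply,
      Matrix.vecHead, Matrix.vecTail]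

set_option maxHeartbeats 1000000 in
theorem homog_inv_mul (p : Fin 3 → ℝ) : homog 1 (-p) * homog 1 p = 1 := by
  rw [homog_one, homog_one]
  ext i j
  fin_cases i <;> fin_cases j <;>
    simp [Matrix.mul_apply, Fin.sum_univ_four, Matrix.one_apply,
      Matrix.vecHead, Matrix.vecTail]

open scoped Matrix in
set_option maxHeartbeats 1000000 in
theorem twist_conj (ω p : Fin 3 → ℝ) (q : ℝ) :
    q • twistM ω (p ⨯₃ ω) = homog 1 p * Phi (q • skew ω, 0) * homog 1 (-p) := by
  rw [Phi_eq, homog_one, homog_one]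
  ext i j
  fin_cases i <;> fin_cases j <;>
    simp [twistM, skew, cross_apply, Matrix.mul_apply, Fin.sum_univ_four,
      Matrix.smul_apply, smul_eq_mul, Matrix.vecHead, Matrix.vecTail] <;> ring

open scoped Matrix in
/-- exponential of a pure rotation twist about an axis through p. -/
theorem exp_rotation_about_point (ω p : Fin 3 → ℝ)
    (hω : Real.sqrt (ω 0 ^ 2 + ω 1 ^ 2 + ω 2 ^ 2) = 1) (q : ℝ) :
    NormedSpace.exp (q • twistM ω (p ⨯₃ ω)) =
      homog (NormedSpace.exp (q • skew ω))
        ((1 - NormedSpace.exp (q • skew ω)) *ᵥ p) := by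
  rw [twist_conj]
  calc NormedSpace.exp (homog 1 p * Phi (q • skew ω, 0) * homog 1 (-p))
      = homog 1 p * NormedSpace.exp (Phi (q • skew ω, 0)) * homog 1 (-p) :=
        Matrix.exp_units_conj
          ⟨homog 1 p, homog 1 (-p), homog_mul_inv p, homog_inv_mul p⟩ _
    _ = homog 1 p * Phi (NormedSpace.exp (q • skew ω), 1) * homog 1 (-p) := by
        rw [exp_Phi]
    _ = homog (NormedSpace.exp (q • skew ω))
        ((1 - NormedSpace.exp (q • skew ω)) *ᵥ p) := by
        rw [Phi_eq]
        simp only [Matrix.one_apply_eq]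
        exact homog_conj _ p
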